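/- In a hidden Markov tree model, the partial state tree entropy at a vertex u can be computed from the conditional entropies of the children subtrees given the state at u, using only the observations within the subtree rooted at u: H(S̄_u | X = x) = Σ_j P(S_u = j | X = x) { H(S̄_{c(u)} | S_u = j, X̄_u = x̄_u) − log P(S_u = j | X = x) }, the sum ranging over the states j with P(S_u = j | X = x) > 0, and the inner entropy term read as 0 when u is a leaf; in particular H(S̄_{c(u)} | S_u = j, X = x) = H(S̄_{c(u)} | S_u = j, X̄_u = x̄_u). -/

import Mathlib

/-- A hidden Markov tree (HMT) model on a finite rooted tree with `n` vertices:
the root is `0` and the vertices are indexed in a topological order, i.e. every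
non-root vertex has a parent with strictly smaller index.  The model has `J`
states and observation alphabet `{0, …, V-1}`, with initial probabilities (for
the root), transition probabilities and emission probabilities. -/
structure HMTModel (J V n : ℕ) [NeZero n] where
  parent : Fin n → Fin n
  parent_lt : ∀ u : Fin n, u ≠ 0 → parent u < u
  init : Fin J → ℝ
  trans : Fin J → Fin J → ℝ
  emit : Fin J → Fin V → ℝ
  init_nonneg : ∀ j, 0 ≤ init j
  init_sum : ∑ j, init j = 1
  trans_nonneg : ∀ i j, 0 ≤ trans i j
  trans_sum : ∀ i, ∑ j, trans i j = 1
  emit_nonneg : ∀ j y, 0 ≤ emit j y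
  emit_sum : ∀ j, ∑ y, emit j y = 1

namespace HMTModel

variable {J V n : ℕ} [NeZero J] [NeZero n]

/-- The joint law of the state tree and the observed tree:
`P(S = s, X = x) = π_{s_0} (∏_{u ≠ 0} p_{s_{ρ(u)} s_u}) ∏_u b_{s_u}(x_u)`. -/
noncomputable def joint (M : HMTModel J V n) (s : Fin n → Fin J) (x : Fin n → Fin V) : ℝ :=
  M.init (s 0) *
    (∏ u ∈ Finset.univ.filter (fun u : Fin n => u ≠ 0), M.trans (s (M.parent u)) (s u)) *
    ∏ u : Fin n, M.emit (s u) (x u)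

open Classical in
/-- Probability of an event on (state tree, observed tree). -/
noncomputable def pr (M : HMTModel J V n)
    (E : (Fin n → Fin J) → (Fin n → Fin V) → Prop) : ℝ :=
  ∑ s : Fin n → Fin J, ∑ y : Fin n → Fin V, if E s y then M.joint s y else 0

/-- Conditional probability `P(A | B)`; it is `0` when the conditioning event
has probability zero. -/
noncomputable def cpr (M : HMTModel J V n)
    (A B : (Fin n → Fin J) → (Fin n → Fin V) → Prop) : ℝ :=
  if 0 < M.pr B then M.pr (fun s y => A s y ∧ B s y) / M.pr B else 0

/-- Entropy of the random vector `f(S)` given the event `E`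
(natural logarithm, with the convention `0 log 0 = 0`). -/
noncomputable def condEnt (M : HMTModel J V n) {α : Type*} [Fintype α]
    (f : (Fin n → Fin J) → α)
    (E : (Fin n → Fin J) → (Fin n → Fin V) → Prop) : ℝ :=
  -∑ a : α, M.cpr (fun s _ => f s = a) E * Real.log (M.cpr (fun s _ => f s = a) E)

/-- Entropy of `f(S)` given the random vector `g(S)` and the event `E`:
`H(f(S) | g(S), E) = ∑_c P(g(S) = c | E) H(f(S) | g(S) = c, E)`. -/
noncomputable def condEntGiven (M : HMTModel J V n) {α β : Type*} [Fintype α] [Fintype β]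
    (f : (Fin n → Fin J) → α) (g : (Fin n → Fin J) → β)
    (E : (Fin n → Fin J) → (Fin n → Fin V) → Prop) : ℝ :=
  ∑ c : β, M.cpr (fun s _ => g s = c) E * M.condEnt f (fun s y => g s = c ∧ E s y)

/-- The event `X = x`. -/
def obsEq (x : Fin n → Fin V) : (Fin n → Fin J) → (Fin n → Fin V) → Prop :=
  fun _ y => y = x

/-- `v` belongs to the complete subtree rooted at `u` (i.e. `u` is obtained
from `v` by repeatedly taking parents). -/
def inSubtree (M : HMTModel J V n) (u v : Fin n) : Prop :=
  Relation.ReflTransGen (fun a b : Fin n => a ≠ 0 ∧ M.parent a = b) v u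

open Classical in
/-- The state subtree `S̄_u` rooted at `u` (coordinates outside the subtree
are padded by `0`). -/
noncomputable def subVar (M : HMTModel J V n) (u : Fin n) (s : Fin n → Fin J) :
    Fin n → Fin J :=
  fun v => if M.inSubtree u v then s v else 0

open Classical in
/-- The collection `S̄_{c(u)}` of state subtrees rooted at the children of `u`
(all other coordinates padded by `0`). -/
noncomputable def childSubVar (M : HMTModel J V n) (u : Fin n) (s : Fin n → Fin J) :
    Fin n → Fin J :=
  fun v => if M.inSubtree u v ∧ v ≠ u then s v else 0

/-- The states `S_{c(u)}` of the children of `u` (all other coordinates padded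
by `0`). -/
def childVar (M : HMTModel J V n) (u : Fin n) (s : Fin n → Fin J) :
    Fin n → Fin J :=
  fun v => if v ≠ 0 ∧ M.parent v = u then s v else 0

/-- The states `(S_v)_{v ∈ Vs}` of a subset `Vs` of vertices (all other
coordinates padded by `0`). -/
def memVar (_M : HMTModel J V n) (Vs : Finset (Fin n)) (s : Fin n → Fin J) :
    Fin n → Fin J :=
  fun v => if v ∈ Vs then s v else 0

end HMTModel
namespace HMTModel

open Finset Classical
set_option linter.unusedSectionVars false

variable {J V n : ℕ} [NeZero J] [NeZero n] (M : HMTModel J V n)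

section Basic

lemma joint_nonneg (s : Fin n → Fin J) (y : Fin n → Fin V) : 0 ≤ M.joint s y := by
  unfold joint
  exact mul_nonneg (mul_nonneg (M.init_nonneg _)
    (prod_nonneg fun _ _ => M.trans_nonneg _ _)) (prod_nonneg fun _ _ => M.emit_nonneg _ _)

lemma pr_nonneg (E : (Fin n → Fin J) → (Fin n → Fin V) → Prop) : 0 ≤ M.pr E := by
  unfold pr
  refine sum_nonneg fun s _ => sum_nonneg fun y _ => ?_
  split
  · exact M.joint_nonneg s y
  · exact le_refl 0

lemma pr_congr {E F : (Fin n → Fin J) → (Fin n → Fin V) → Prop}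
    (h : ∀ s y, E s y ↔ F s y) : M.pr E = M.pr F := by
  unfold pr
  refine sum_congr rfl fun s _ => sum_congr rfl fun y _ => ?_
  simp [h s y]

lemma pr_mono {E F : (Fin n → Fin J) → (Fin n → Fin V) → Prop}
    (h : ∀ s y, E s y → F s y) : M.pr E ≤ M.pr F := by
  unfold pr
  refine sum_le_sum fun s _ => sum_le_sum fun y _ => ?_
  by_cases hE : E s y
  · simp [hE, h s y hE]
  · simp only [if_neg hE]
    split
    · exact M.joint_nonneg s y
    · exact le_refl 0

lemma cpr_nonneg (A B : (Fin n → Fin J) → (Fin n → Fin V) → Prop) : 0 ≤ M.cpr A B := by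
  unfold cpr
  split
  · exact div_nonneg (M.pr_nonneg _) (M.pr_nonneg _)
  · exact le_refl 0

lemma cpr_of_pos {B : (Fin n → Fin J) → (Fin n → Fin V) → Prop}
    (A : (Fin n → Fin J) → (Fin n → Fin V) → Prop) (h : 0 < M.pr B) :
    M.cpr A B = M.pr (fun s y => A s y ∧ B s y) / M.pr B := if_pos h

lemma pr_fiber_sum {α : Type*} [Fintype α] [DecidableEq α] (f : (Fin n → Fin J) → α)
    (E : (Fin n → Fin J) → (Fin n → Fin V) → Prop) :
    ∑ a : α, M.pr (fun s y => f s = a ∧ E s y) = M.pr E := by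
  unfold pr
  rw [Finset.sum_comm]
  refine sum_congr rfl fun s _ => ?_
  rw [Finset.sum_comm]
  refine sum_congr rfl fun y _ => ?_
  by_cases hE : E s y
  · simp [hE]
  · simp [hE]

lemma cpr_fiber_sum {α : Type*} [Fintype α] [DecidableEq α] (f : (Fin n → Fin J) → α)
    {E : (Fin n → Fin J) → (Fin n → Fin V) → Prop} (hE : 0 < M.pr E) :
    ∑ a : α, M.cpr (fun s _ => f s = a) E = 1 := by
  have : ∀ a : α, M.cpr (fun s _ => f s = a) E = M.pr (fun s y => f s = a ∧ E s y) / M.pr E :=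
    fun a => M.cpr_of_pos _ hE
  simp only [this]
  rw [← Finset.sum_div, M.pr_fiber_sum f E, div_self hE.ne']

end Basic

section Entropy

variable {α β : Type*} [Fintype α] [Fintype β]

lemma cpr_congr {A A' B B' : (Fin n → Fin J) → (Fin n → Fin V) → Prop}
    (hA : ∀ s y, A s y ↔ A' s y) (hB : ∀ s y, B s y ↔ B' s y) :
    M.cpr A B = M.cpr A' B' := by
  unfold cpr
  rw [M.pr_congr hB, M.pr_congr (fun s y => and_congr (hA s y) (hB s y))]

lemma condEnt_congr {f : (Fin n → Fin J) → α} {E F : (Fin n → Fin J) → (Fin n → Fin V) → Prop}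
    (h : ∀ s y, E s y ↔ F s y) : M.condEnt f E = M.condEnt f F := by
  unfold condEnt
  congr 1
  refine sum_congr rfl fun a _ => ?_
  rw [M.cpr_congr (fun s y => Iff.rfl) h]

lemma cpr_eq_zero_of_empty {A B : (Fin n → Fin J) → (Fin n → Fin V) → Prop}
    (h : ∀ s y, ¬ A s y) : M.cpr A B = 0 := by
  unfold cpr
  split
  · rw [M.pr_congr (F := fun _ _ => False) (fun s y => by simp [h s y])]
    unfold pr; simp
  · rfl

lemma condEnt_comp_inj (f : (Fin n → Fin J) → α) (e : α → β) (he : Function.Injective e)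
    (E : (Fin n → Fin J) → (Fin n → Fin V) → Prop) :
    M.condEnt (fun s => e (f s)) E = M.condEnt f E := by
  classical
  unfold condEnt
  congr 1
  calc ∑ b : β, M.cpr (fun s _ => e (f s) = b) E * Real.log (M.cpr (fun s _ => e (f s) = b) E)
      = ∑ b ∈ univ.image e, M.cpr (fun s _ => e (f s) = b) E *
          Real.log (M.cpr (fun s _ => e (f s) = b) E) := by
        refine (Finset.sum_subset (subset_univ _) fun b _ hb => ?_).symm
        rw [M.cpr_eq_zero_of_empty fun s y hs => hb (mem_image.2 ⟨f s, mem_univ _, hs⟩)]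
        simp
    _ = ∑ a : α, M.cpr (fun s _ => e (f s) = e a) E *
          Real.log (M.cpr (fun s _ => e (f s) = e a) E) :=
        Finset.sum_image fun a _ b _ hab => he hab
    _ = _ := by
        refine sum_congr rfl fun a _ => ?_
        rw [M.cpr_congr (A' := fun s _ => f s = a) (B' := E)
          (fun s y => by simp [he.eq_iff]) (fun s y => Iff.rfl)]

lemma condEnt_const (c0 : α) {E : (Fin n → Fin J) → (Fin n → Fin V) → Prop}
    (hE : 0 < M.pr E) : M.condEnt (fun _ => c0) E = 0 := by
  classical
  unfold condEnt
  rw [neg_eq_zero]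
  refine Finset.sum_eq_zero fun a _ => ?_
  by_cases h : c0 = a
  · have : M.cpr (fun _ _ => c0 = a) E = 1 := by
      rw [M.cpr_of_pos _ hE, M.pr_congr (F := E) (fun s y => by simp [h]), div_self hE.ne']
    rw [this]; simp
  · rw [M.cpr_eq_zero_of_empty (fun s y => h)]; simp

lemma cpr_bayes (f : (Fin n → Fin J) → α) (g : (Fin n → Fin J) → β)
    {E : (Fin n → Fin J) → (Fin n → Fin V) → Prop} (hE : 0 < M.pr E) (c : β) (b : α) :
    M.cpr (fun s _ => (g s, f s) = (c, b)) E
      = M.cpr (fun s _ => g s = c) E * M.cpr (fun s _ => f s = b) (fun s y => g s = c ∧ E s y) := by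
  have hL : M.cpr (fun s _ => (g s, f s) = (c, b)) E
      = M.pr (fun s y => f s = b ∧ (g s = c ∧ E s y)) / M.pr E := by
    rw [M.cpr_of_pos _ hE]
    congr 1
    exact M.pr_congr fun s y => by simp only [Prod.mk.injEq]; tauto
  by_cases h : 0 < M.pr (fun s y => g s = c ∧ E s y)
  · rw [hL, M.cpr_of_pos _ hE, M.cpr_of_pos _ h]
    field_simp
  · have h0 : M.pr (fun s y => g s = c ∧ E s y) = 0 :=
      le_antisymm (not_lt.1 h) (M.pr_nonneg _)
    have h1 : M.pr (fun s y => f s = b ∧ (g s = c ∧ E s y)) = 0 :=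
      le_antisymm (h0 ▸ M.pr_mono fun s y hy => hy.2) (M.pr_nonneg _)
    rw [hL, h1, zero_div]
    unfold cpr
    rw [if_neg h, mul_zero]

lemma condEnt_pair (f : (Fin n → Fin J) → α) (g : (Fin n → Fin J) → β)
    {E : (Fin n → Fin J) → (Fin n → Fin V) → Prop} (hE : 0 < M.pr E) :
    M.condEnt (fun s => (g s, f s)) E = M.condEnt g E + M.condEntGiven f g E := by
  classical
  have key : ∀ c : β,
      -∑ b : α, M.cpr (fun s _ => (g s, f s) = (c, b)) E *
          Real.log (M.cpr (fun s _ => (g s, f s) = (c, b)) E)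
      = -(M.cpr (fun s _ => g s = c) E * Real.log (M.cpr (fun s _ => g s = c) E))
        + M.cpr (fun s _ => g s = c) E * M.condEnt f (fun s y => g s = c ∧ E s y) := by
    intro c
    set q := M.cpr (fun s _ => g s = c) E with hq
    set r := fun b => M.cpr (fun s _ => f s = b) (fun s y => g s = c ∧ E s y) with hr
    have hbayes : ∀ b, M.cpr (fun s _ => (g s, f s) = (c, b)) E = q * r b :=
      fun b => M.cpr_bayes f g hE c b
    by_cases hc : 0 < M.pr (fun s y => g s = c ∧ E s y)
    · have hrsum : ∑ b : α, r b = 1 := M.cpr_fiber_sum f hc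
      have point : ∀ b, q * r b * Real.log (q * r b)
          = q * r b * Real.log q + q * (r b * Real.log (r b)) := by
        intro b
        by_cases hq0 : q = 0
        · simp [hq0]
        by_cases hr0 : r b = 0
        · simp [hr0]
        rw [Real.log_mul hq0 hr0]
        ring
      have e1 : ∑ b : α, q * r b * Real.log q = q * Real.log q := by
        rw [← Finset.sum_mul, ← Finset.mul_sum, hrsum, mul_one]
      have e2 : ∑ b : α, q * (r b * Real.log (r b)) = q * ∑ b : α, r b * Real.log (r b) := by
        rw [Finset.mul_sum]
      simp only [hbayes, point]
      rw [Finset.sum_add_distrib, e1, e2]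
      unfold condEnt
      ring
    · have h0 : M.pr (fun s y => g s = c ∧ E s y) = 0 :=
        le_antisymm (not_lt.1 hc) (M.pr_nonneg _)
      have hq0 : q = 0 := by
        rw [hq, M.cpr_of_pos _ hE]
        rw [M.pr_congr (F := fun s y => g s = c ∧ E s y) (fun s y => Iff.rfl), h0, zero_div]
      have hr0 : ∀ b, r b = 0 := fun b => by simp only [hr, cpr, if_neg hc]
      simp only [hbayes, hq0, hr0, zero_mul, mul_zero]
      simp
  unfold condEntGiven
  calc M.condEnt (fun s => (g s, f s)) E
      = ∑ c : β, -∑ b : α, M.cpr (fun s _ => (g s, f s) = (c, b)) E *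
          Real.log (M.cpr (fun s _ => (g s, f s) = (c, b)) E) := by
        unfold condEnt
        rw [Fintype.sum_prod_type, ← Finset.sum_neg_distrib]
    _ = ∑ c : β, (-(M.cpr (fun s _ => g s = c) E * Real.log (M.cpr (fun s _ => g s = c) E))
        + M.cpr (fun s _ => g s = c) E * M.condEnt f (fun s y => g s = c ∧ E s y)) :=
        sum_congr rfl fun c _ => key c
    _ = _ := by
        rw [Finset.sum_add_distrib, Finset.sum_neg_distrib]
        rfl

end Entropy


section Tree

variable (u : Fin n)

lemma inSubtree_self : M.inSubtree u u := Relation.ReflTransGen.refl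

lemma inSubtree_of_parent {v : Fin n} (hv : v ≠ 0) (h : M.inSubtree u (M.parent v)) :
    M.inSubtree u v := Relation.ReflTransGen.head ⟨hv, rfl⟩ h

lemma inSubtree_step {v : Fin n} (h : M.inSubtree u v) (hvu : v ≠ u) :
    v ≠ 0 ∧ M.inSubtree u (M.parent v) := by
  rcases Relation.ReflTransGen.cases_head h with h | ⟨c, ⟨h0, hp⟩, hc⟩
  · exact absurd h hvu
  · exact ⟨h0, hp ▸ hc⟩

lemma le_of_inSubtree {v : Fin n} (h : M.inSubtree u v) : u ≤ v := by
  induction h using Relation.ReflTransGen.head_induction_on with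
  | refl => exact le_refl u
  | head h' _ ih =>
      rcases h' with ⟨h0, hp⟩
      exact le_of_lt (lt_of_le_of_lt (hp ▸ ih) (M.parent_lt _ h0))

lemma parent_not_inSubtree (hu : u ≠ 0) : ¬ M.inSubtree u (M.parent u) := fun h =>
  absurd (lt_of_le_of_lt (M.le_of_inSubtree u h) (M.parent_lt u hu)) (lt_irrefl u)

lemma not_inSubtree_parent {v : Fin n} (hv : v ≠ 0) (h : ¬ M.inSubtree u v) :
    ¬ M.inSubtree u (M.parent v) := fun hp => h (M.inSubtree_of_parent u hv hp)

lemma zero_inSubtree_iff : M.inSubtree u 0 ↔ u = 0 := by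
  constructor
  · intro h
    have := M.le_of_inSubtree u h
    exact Fin.ext (Nat.le_zero.1 (by simpa [Fin.le_def] using this))
  · rintro rfl; exact M.inSubtree_self 0

lemma leaf_subtree (hleaf : ∀ v : Fin n, ¬(v ≠ 0 ∧ M.parent v = u)) {v : Fin n}
    (h : M.inSubtree u v) : v = u := by
  induction h using Relation.ReflTransGen.head_induction_on with
  | refl => rfl
  | head h' _ ih =>
      rename_i a c _
      exact absurd ⟨h'.1, ih ▸ h'.2⟩ (hleaf a)

open Classical in
noncomputable def inFac (s : Fin n → Fin J) (y : Fin n → Fin V) : ℝ :=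
  (∏ v ∈ univ.filter (fun v => M.inSubtree u v ∧ v ≠ u), M.trans (s (M.parent v)) (s v)) *
  ∏ v ∈ univ.filter (fun v => M.inSubtree u v), M.emit (s v) (y v)

open Classical in
noncomputable def outFac (s : Fin n → Fin J) (y : Fin n → Fin V) : ℝ :=
  M.init (s 0) *
  (∏ v ∈ univ.filter (fun v => v ≠ 0 ∧ ¬(M.inSubtree u v ∧ v ≠ u)),
      M.trans (s (M.parent v)) (s v)) *
  ∏ v ∈ univ.filter (fun v => ¬ M.inSubtree u v), M.emit (s v) (y v)

open Classical in
lemma joint_factor (s : Fin n → Fin J) (y : Fin n → Fin V) :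
    M.joint s y = M.inFac u s y * M.outFac u s y := by
  unfold joint inFac outFac
  have htrans : (∏ v ∈ univ.filter (fun v : Fin n => v ≠ 0), M.trans (s (M.parent v)) (s v))
      = (∏ v ∈ univ.filter (fun v => M.inSubtree u v ∧ v ≠ u), M.trans (s (M.parent v)) (s v)) *
        ∏ v ∈ univ.filter (fun v => v ≠ 0 ∧ ¬(M.inSubtree u v ∧ v ≠ u)),
          M.trans (s (M.parent v)) (s v) := by
    rw [← Finset.prod_filter_mul_prod_filter_not (univ.filter (fun v : Fin n => v ≠ 0))
      (fun v => M.inSubtree u v ∧ v ≠ u)]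
    congr 1
    · congr 1
      rw [Finset.filter_filter]
      refine Finset.filter_congr fun v _ => ?_
      constructor
      · rintro ⟨-, h⟩; exact h
      · intro h; exact ⟨(M.inSubtree_step u h.1 h.2).1, h⟩
    · congr 1
      rw [Finset.filter_filter]
  have hemit : (∏ v : Fin n, M.emit (s v) (y v))
      = (∏ v ∈ univ.filter (fun v => M.inSubtree u v), M.emit (s v) (y v)) *
        ∏ v ∈ univ.filter (fun v => ¬ M.inSubtree u v), M.emit (s v) (y v) :=
    (Finset.prod_filter_mul_prod_filter_not univ _ _).symm
  rw [htrans, hemit]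
  ring

lemma inFac_congr {s s' : Fin n → Fin J} {y y' : Fin n → Fin V}
    (hs : ∀ v, M.inSubtree u v → s v = s' v) (hy : ∀ v, M.inSubtree u v → y v = y' v) :
    M.inFac u s y = M.inFac u s' y' := by
  unfold inFac
  congr 1
  · refine Finset.prod_congr rfl fun v hv => ?_
    rw [Finset.mem_filter] at hv
    rw [hs v hv.2.1, hs (M.parent v) (M.inSubtree_step u hv.2.1 hv.2.2).2]
  · refine Finset.prod_congr rfl fun v hv => ?_
    rw [Finset.mem_filter] at hv
    rw [hs v hv.2, hy v hv.2]

lemma outFac_congr {s s' : Fin n → Fin J} {y y' : Fin n → Fin V}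
    (hs : ∀ v, ¬ M.inSubtree u v → s v = s' v) (hsu : s u = s' u)
    (hy : ∀ v, ¬ M.inSubtree u v → y v = y' v) :
    M.outFac u s y = M.outFac u s' y' := by
  unfold outFac
  have hzero : M.init (s 0) = M.init (s' 0) := by
    by_cases h0 : u = 0
    · subst h0; rw [hsu]
    · rw [hs 0 (fun h => h0 ((M.zero_inSubtree_iff u).1 h))]
  congr 1
  · rw [hzero]
    congr 1
    refine Finset.prod_congr rfl fun v hv => ?_
    rw [Finset.mem_filter] at hv
    obtain ⟨-, hv0, hv2⟩ := hv
    push_neg at hv2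
    by_cases hT : M.inSubtree u v
    · have hvu : v = u := hv2 hT
      subst hvu
      rw [hsu, hs (M.parent v) (M.parent_not_inSubtree v hv0)]
    · rw [hs v hT, hs (M.parent v) (M.not_inSubtree_parent u hv0 hT)]
  · refine Finset.prod_congr rfl fun v hv => ?_
    rw [Finset.mem_filter] at hv
    rw [hs v hv.2, hy v hv.2]

end Tree

section Swap

variable (u : Fin n)

open Classical in
noncomputable def mg {γ : Type*} (a b : Fin n → γ) : Fin n → γ :=
  fun v => if M.inSubtree u v then a v else b v

lemma mg_in {γ : Type*} {a b : Fin n → γ} {v : Fin n} (h : M.inSubtree u v) :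
    M.mg u a b v = a v := if_pos h

lemma mg_out {γ : Type*} {a b : Fin n → γ} {v : Fin n} (h : ¬ M.inSubtree u v) :
    M.mg u a b v = b v := if_neg h

lemma mg_invol {γ : Type*} (a b : Fin n → γ) : M.mg u (M.mg u a b) (M.mg u b a) = a := by
  funext v
  by_cases h : M.inSubtree u v
  · rw [M.mg_in u h, M.mg_in u h]
  · rw [M.mg_out u h, M.mg_out u h]

lemma childSubVar_mg (s s' : Fin n → Fin J) :
    M.childSubVar u (M.mg u s s') = M.childSubVar u s := by
  funext v
  unfold childSubVar
  split
  · next h => exact M.mg_in u h.1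
  · rfl

lemma joint_mg_swap {s s' : Fin n → Fin J} {y y' : Fin n → Fin V} (h : s u = s' u) :
    M.joint (M.mg u s s') (M.mg u y y') * M.joint (M.mg u s' s) (M.mg u y' y)
      = M.joint s y * M.joint s' y' := by
  rw [M.joint_factor u s y, M.joint_factor u s' y',
    M.joint_factor u (M.mg u s s') (M.mg u y y'), M.joint_factor u (M.mg u s' s) (M.mg u y' y)]
  have i1 : M.inFac u (M.mg u s s') (M.mg u y y') = M.inFac u s y :=
    M.inFac_congr u (fun v hv => M.mg_in u hv) (fun v hv => M.mg_in u hv)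
  have i2 : M.inFac u (M.mg u s' s) (M.mg u y' y) = M.inFac u s' y' :=
    M.inFac_congr u (fun v hv => M.mg_in u hv) (fun v hv => M.mg_in u hv)
  have o1 : M.outFac u (M.mg u s s') (M.mg u y y') = M.outFac u s' y' :=
    M.outFac_congr u (fun v hv => M.mg_out u hv)
      (by rw [M.mg_in u (M.inSubtree_self u), h]) (fun v hv => M.mg_out u hv)
  have o2 : M.outFac u (M.mg u s' s) (M.mg u y' y) = M.outFac u s y :=
    M.outFac_congr u (fun v hv => M.mg_out u hv)
      (by rw [M.mg_in u (M.inSubtree_self u), h]) (fun v hv => M.mg_out u hv)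
  rw [i1, i2, o1, o2]
  ring

open Classical in
lemma pr_mul_pr (E1 E2 : (Fin n → Fin J) → (Fin n → Fin V) → Prop) :
    M.pr E1 * M.pr E2 =
      ∑ p : ((Fin n → Fin J) × (Fin n → Fin V)) × ((Fin n → Fin J) × (Fin n → Fin V)),
        (if E1 p.1.1 p.1.2 then M.joint p.1.1 p.1.2 else 0) *
          (if E2 p.2.1 p.2.2 then M.joint p.2.1 p.2.2 else 0) := by
  unfold pr
  rw [← Fintype.sum_prod_type' (f := fun s y => if E1 s y then M.joint s y else 0),
    ← Fintype.sum_prod_type' (f := fun s y => if E2 s y then M.joint s y else 0),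
    Finset.sum_mul_sum]
  exact (Fintype.sum_prod_type' fun p q : (Fin n → Fin J) × (Fin n → Fin V) =>
      (if E1 p.1 p.2 then M.joint p.1 p.2 else 0) *
        (if E2 q.1 q.2 then M.joint q.1 q.2 else 0)).symm

open Classical in
lemma cross (a : Fin n → Fin J) (j : Fin J) (x : Fin n → Fin V) :
    M.pr (fun s y => M.childSubVar u s = a ∧ (s u = j ∧ y = x)) *
      M.pr (fun s y => s u = j ∧ ∀ v, M.inSubtree u v → y v = x v)
    = M.pr (fun s y => M.childSubVar u s = a ∧ (s u = j ∧ ∀ v, M.inSubtree u v → y v = x v)) *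
      M.pr (fun s y => s u = j ∧ y = x) := by
  classical
  set C1 : (Fin n → Fin J) → (Fin n → Fin V) → Prop :=
    fun s y => M.childSubVar u s = a ∧ (s u = j ∧ y = x) with hC1
  set D1 : (Fin n → Fin J) → (Fin n → Fin V) → Prop :=
    fun s y => s u = j ∧ ∀ v, M.inSubtree u v → y v = x v with hD1
  set C2 : (Fin n → Fin J) → (Fin n → Fin V) → Prop :=
    fun s y => M.childSubVar u s = a ∧ (s u = j ∧ ∀ v, M.inSubtree u v → y v = x v) with hC2
  set D2 : (Fin n → Fin J) → (Fin n → Fin V) → Prop := fun s y => s u = j ∧ y = x with hD2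
  have imp1 : ∀ s y s' y', C1 s y → D1 s' y' →
      C2 (M.mg u s s') (M.mg u y y') ∧ D2 (M.mg u s' s) (M.mg u y' y) := by
    intro s y s' y' ⟨hc, hsu, hyx⟩ ⟨hsu', hagree⟩
    subst hyx
    refine ⟨⟨(M.childSubVar_mg u s s').trans hc, by rw [M.mg_in u (M.inSubtree_self u)]; exact hsu,
        fun v hv => by rw [M.mg_in u hv]⟩,
      ⟨by rw [M.mg_in u (M.inSubtree_self u)]; exact hsu', ?_⟩⟩
    funext v
    by_cases hT : M.inSubtree u v
    · rw [M.mg_in u hT]; exact hagree v hT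
    · rw [M.mg_out u hT]
  have imp2 : ∀ s y s' y', C2 s y → D2 s' y' →
      C1 (M.mg u s s') (M.mg u y y') ∧ D1 (M.mg u s' s) (M.mg u y' y) := by
    intro s y s' y' ⟨hc, hsu, hagree⟩ ⟨hsu', hyx⟩
    subst hyx
    refine ⟨⟨(M.childSubVar_mg u s s').trans hc, by rw [M.mg_in u (M.inSubtree_self u)]; exact hsu,
        ?_⟩,
      ⟨by rw [M.mg_in u (M.inSubtree_self u)]; exact hsu', fun v hv => by rw [M.mg_in u hv]⟩⟩
    funext v
    by_cases hT : M.inSubtree u v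
    · rw [M.mg_in u hT]; exact hagree v hT
    · rw [M.mg_out u hT]
  rw [M.pr_mul_pr, M.pr_mul_pr]
  have hinv : Function.Involutive (fun p :
      ((Fin n → Fin J) × (Fin n → Fin V)) × ((Fin n → Fin J) × (Fin n → Fin V)) =>
      ((M.mg u p.1.1 p.2.1, M.mg u p.1.2 p.2.2), (M.mg u p.2.1 p.1.1, M.mg u p.2.2 p.1.2))) := by
    intro p
    obtain ⟨⟨s, y⟩, ⟨s', y'⟩⟩ := p
    dsimp only
    simp only [Prod.mk.injEq]
    refine ⟨⟨?_, ?_⟩, ?_, ?_⟩ <;> exact M.mg_invol u _ _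
  refine Fintype.sum_equiv hinv.toPerm _ _ fun p => ?_
  rw [Function.Involutive.coe_toPerm]
  obtain ⟨⟨s, y⟩, ⟨s', y'⟩⟩ := p
  dsimp only
  by_cases h : C1 s y ∧ D1 s' y'
  · obtain ⟨h1, h2⟩ := h
    obtain ⟨h3, h4⟩ := imp1 s y s' y' h1 h2
    rw [if_pos h1, if_pos h2, if_pos h3, if_pos h4]
    exact (M.joint_mg_swap u (h1.2.1.trans h2.1.symm)).symm
  · have h' : ¬(C2 (M.mg u s s') (M.mg u y y') ∧ D2 (M.mg u s' s) (M.mg u y' y)) := by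
      rintro ⟨h3, h4⟩
      obtain ⟨h5, h6⟩ := imp2 _ _ _ _ h3 h4
      rw [M.mg_invol u, M.mg_invol u] at h5 h6
      exact h ⟨h5, h6⟩
    rcases not_and_or.1 h with h1 | h1
    · rcases not_and_or.1 h' with h2 | h2
      · rw [if_neg h1, if_neg h2, zero_mul, zero_mul]
      · rw [if_neg h1, if_neg h2, zero_mul, mul_zero]
    · rcases not_and_or.1 h' with h2 | h2
      · rw [if_neg h1, if_neg h2, mul_zero, zero_mul]
      · rw [if_neg h1, if_neg h2, mul_zero, mul_zero]

end Swap

section Main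

variable (u : Fin n)

lemma condEnt_child_obs (x : Fin n → Fin V) (j : Fin J)
    (h1 : 0 < M.pr (fun s y => s u = j ∧ y = x)) :
    M.condEnt (M.childSubVar u) (fun s y => s u = j ∧ y = x)
      = M.condEnt (M.childSubVar u)
          (fun s y => s u = j ∧ ∀ v, M.inSubtree u v → y v = x v) := by
  have h2 : 0 < M.pr (fun s y => s u = j ∧ ∀ v, M.inSubtree u v → y v = x v) :=
    lt_of_lt_of_le h1 (M.pr_mono fun s y hy => ⟨hy.1, fun v _ => by rw [hy.2]⟩)
  unfold condEnt
  congr 1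
  refine sum_congr rfl fun a _ => ?_
  have hkey : M.cpr (fun s _ => M.childSubVar u s = a) (fun s y => s u = j ∧ y = x)
      = M.cpr (fun s _ => M.childSubVar u s = a)
          (fun s y => s u = j ∧ ∀ v, M.inSubtree u v → y v = x v) := by
    rw [M.cpr_of_pos _ h1, M.cpr_of_pos _ h2, div_eq_div_iff h1.ne' h2.ne']
    exact M.cross u a j x
  rw [hkey]

lemma leaf_childSubVar (hleaf : ∀ v : Fin n, ¬(v ≠ 0 ∧ M.parent v = u)) :
    M.childSubVar u = fun _ _ => (0 : Fin J) := by
  funext s v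
  unfold childSubVar
  rw [if_neg]
  rintro ⟨hT, hvu⟩
  exact hvu (M.leaf_subtree u hleaf hT)

end Main

end HMTModel

open HMTModel Finset

theorem hmt_partial_entropy_from_upward_quantities'
    {J V n : ℕ} [NeZero J] [NeZero n] (M : HMTModel J V n)
    (x : Fin n → Fin V) (hx : 0 < M.pr (obsEq x))
    (u : Fin n) (ξ : Fin J → ℝ)
    (hξ : ∀ j, ξ j = M.cpr (fun s _ => s u = j) (obsEq x)) :
    (M.condEnt (M.subVar u) (obsEq x)
      = ∑ j ∈ Finset.univ.filter (fun j : Fin J => 0 < ξ j),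
          ξ j * ((if Finset.univ.filter (fun v : Fin n => v ≠ 0 ∧ M.parent v = u) = ∅
                  then 0
                  else M.condEnt (M.childSubVar u)
                      (fun s y => s u = j ∧ ∀ v : Fin n, M.inSubtree u v → y v = x v))
                 - Real.log (ξ j)))
    ∧ ∀ j : Fin J, 0 < ξ j →
        M.condEnt (M.childSubVar u) (fun s y => s u = j ∧ y = x)
          = M.condEnt (M.childSubVar u)
              (fun s y => s u = j ∧ ∀ v : Fin n, M.inSubtree u v → y v = x v) := by
  classical
  have hξnn : ∀ j, 0 ≤ ξ j := fun j => (hξ j) ▸ M.cpr_nonneg _ _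
  -- positivity of the conditioning events
  have hB1 : ∀ j : Fin J, 0 < ξ j → 0 < M.pr (fun s y => s u = j ∧ y = x) := by
    intro j hj
    have h1 : M.cpr (fun s _ => s u = j) (obsEq x)
        = M.pr (fun s y => s u = j ∧ y = x) / M.pr (obsEq x) := by
      rw [M.cpr_of_pos _ hx]
      rfl
    have h2 : M.pr (fun s y => s u = j ∧ y = x) = ξ j * M.pr (obsEq x) := by
      rw [hξ j, h1, div_mul_cancel₀ _ hx.ne']
    rw [h2]
    exact mul_pos hj hx
  have part2 : ∀ j : Fin J, 0 < ξ j →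
      M.condEnt (M.childSubVar u) (fun s y => s u = j ∧ y = x)
        = M.condEnt (M.childSubVar u)
            (fun s y => s u = j ∧ ∀ v : Fin n, M.inSubtree u v → y v = x v) :=
    fun j hj => M.condEnt_child_obs u x j (hB1 j hj)
  refine ⟨?_, part2⟩
  -- step A : repackage subVar as the pair (state at u, children subtrees)
  have e_inj : Function.Injective
      (fun a : Fin n → Fin J => (a u, Function.update a u 0)) := by
    intro a b hab
    simp only [Prod.mk.injEq] at hab
    obtain ⟨h1, h2⟩ := hab
    funext v
    by_cases hv : v = u
    · subst hv; exact h1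
    · have := congrFun h2 v
      rwa [Function.update_of_ne hv, Function.update_of_ne hv] at this
  have stepA : M.condEnt (M.subVar u) (obsEq x)
      = M.condEnt (fun s => (s u, M.childSubVar u s)) (obsEq x) := by
    rw [← M.condEnt_comp_inj (M.subVar u)
      (fun a : Fin n → Fin J => (a u, Function.update a u 0)) e_inj (obsEq x)]
    congr 1
    funext s
    refine Prod.ext ?_ ?_
    · show M.subVar u s u = s u
      unfold subVar
      rw [if_pos (M.inSubtree_self u)]
    · show Function.update (M.subVar u s) u 0 = M.childSubVar u s
      funext v
      by_cases hv : v = u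
      · subst hv
        rw [Function.update_self]
        unfold childSubVar
        rw [if_neg (fun h => h.2 rfl)]
      · rw [Function.update_of_ne hv]
        unfold subVar childSubVar
        by_cases hT : M.inSubtree u v
        · rw [if_pos hT, if_pos ⟨hT, hv⟩]
        · rw [if_neg hT, if_neg (fun h => hT h.1)]
  have stepB := M.condEnt_pair (M.childSubVar u) (fun s => s u) hx
  rw [stepA, stepB]
  -- rewrite the two pieces using ξ
  have stepC : M.condEnt (fun s => s u) (obsEq x) = -∑ j : Fin J, ξ j * Real.log (ξ j) := by
    unfold condEnt
    exact congrArg Neg.neg (sum_congr rfl fun j _ => by rw [hξ j])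
  have stepD : M.condEntGiven (M.childSubVar u) (fun s => s u) (obsEq x)
      = ∑ j : Fin J, ξ j * M.condEnt (M.childSubVar u) (fun s y => s u = j ∧ y = x) := by
    unfold condEntGiven
    refine sum_congr rfl fun j _ => ?_
    rw [hξ j]
    rfl
  rw [stepC, stepD, Finset.sum_filter, ← Finset.sum_neg_distrib, ← Finset.sum_add_distrib]
  refine sum_congr rfl fun j _ => ?_
  by_cases hj : 0 < ξ j
  · rw [if_pos hj]
    by_cases hleaf : Finset.univ.filter (fun v : Fin n => v ≠ 0 ∧ M.parent v = u) = ∅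
    · rw [if_pos hleaf]
      have hleaf' : ∀ v : Fin n, ¬(v ≠ 0 ∧ M.parent v = u) := by
        intro v hv
        exact absurd (Finset.mem_filter.2 ⟨mem_univ v, hv⟩) (by rw [hleaf]; simp)
      have hzero : M.condEnt (M.childSubVar u) (fun s y => s u = j ∧ y = x) = 0 := by
        rw [M.leaf_childSubVar u hleaf']
        exact M.condEnt_const _ (hB1 j hj)
      rw [hzero]
      ring
    · rw [if_neg hleaf, part2 j hj]
      ring
  · have h0 : ξ j = 0 := le_antisymm (not_lt.1 hj) (hξnn j)
    rw [if_neg hj, h0]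
    simp


open HMTModel

/-- In a hidden Markov tree model, the partial state tree entropy
at a vertex `u` can be computed from the conditional entropies of the children
subtrees given the state at `u`, using only the observations within the subtree
rooted at `u`:
`H(S̄_u | X = x) = ∑_j P(S_u = j | X = x)
    { H(S̄_{c(u)} | S_u = j, X̄_u = x̄_u) − log P(S_u = j | X = x) }`,
the sum ranging over the states `j` with `P(S_u = j | X = x) > 0` and the inner
entropy term read as `0` when `u` is a leaf; in particular
`H(S̄_{c(u)} | S_u = j, X = x) = H(S̄_{c(u)} | S_u = j, X̄_u = x̄_u)`. -/
theorem hmt_partial_entropy_from_upward_quantities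
    {J V n : ℕ} [NeZero J] [NeZero n] (M : HMTModel J V n)
    (x : Fin n → Fin V) (hx : 0 < M.pr (obsEq x))
    (u : Fin n) (ξ : Fin J → ℝ)
    (hξ : ∀ j, ξ j = M.cpr (fun s _ => s u = j) (obsEq x)) :
    (M.condEnt (M.subVar u) (obsEq x)
      = ∑ j ∈ Finset.univ.filter (fun j : Fin J => 0 < ξ j),
          ξ j * ((if Finset.univ.filter (fun v : Fin n => v ≠ 0 ∧ M.parent v = u) = ∅
                  then 0
                  else M.condEnt (M.childSubVar u)
                      (fun s y => s u = j ∧ ∀ v : Fin n, M.inSubtree u v → y v = x v))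
                 - Real.log (ξ j)))
    ∧ ∀ j : Fin J, 0 < ξ j →
        M.condEnt (M.childSubVar u) (fun s y => s u = j ∧ y = x)
          = M.condEnt (M.childSubVar u)
              (fun s y => s u = j ∧ ∀ v : Fin n, M.inSubtree u v → y v = x v) := by
  exact hmt_partial_entropy_from_upward_quantities' M x hx u ξ hξ
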